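/- arXiv:1212.2857 — 3 statements merged into one kernel-verified Lean document; each statement's English description precedes it below -/
import Mathlib

section
/- In a Dung argumentation framework, every stable extension is a preferred extension (a maximal admissible set with respect to set inclusion). -/
def conflictFree {Args : Type*} (R : Args → Args → Prop) (B : Set Args) : Prop :=
  ∀ a ∈ B, ∀ b ∈ B, ¬ R a b

def defends {Args : Type*} (R : Args → Args → Prop) (B : Set Args) (b : Args) : Prop :=
  ∀ a, R a b → ∃ c ∈ B, R c a

def admissible {Args : Type*} (R : Args → Args → Prop) (B : Set Args) : Prop :=
  conflictFree R B ∧ ∀ b ∈ B, defends R B b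

def stable {Args : Type*} (R : Args → Args → Prop) (B : Set Args) : Prop :=
  conflictFree R B ∧ ∀ a ∉ B, ∃ b ∈ B, R b a

def preferred {Args : Type*} (R : Args → Args → Prop) (B : Set Args) : Prop :=
  admissible R B ∧ ∀ C, admissible R C → B ⊆ C → B = C

theorem stable_is_preferred
    {Args : Type*} [Fintype Args] (R : Args → Args → Prop) (B : Set Args)
    (h : stable R B) : preferred R B := by
  obtain ⟨hcf, hst⟩ := h
  refine ⟨⟨hcf, ?_⟩, ?_⟩
  · intro b hb a hab
    by_cases ha : a ∈ B
    · exact absurd hab (hcf a ha b hb)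
    · exact hst a ha
  · intro C hC hBC
    apply Set.Subset.antisymm hBC
    intro c hc
    by_contra hcB
    obtain ⟨b, hb, hba⟩ := hst c hcB
    exact hC.1 b (hBC hb) c hc hba
end

section
/- In a finite Dung argumentation framework, every preferred extension is a complete extension. -/
def complete {Args : Type*} (R : Args → Args → Prop) (B : Set Args) : Prop :=
  admissible R B ∧ ∀ b, defends R B b → b ∈ B

theorem preferred_is_complete
    {Args : Type*} [Fintype Args] (R : Args → Args → Prop) (B : Set Args)
    (h : preferred R B) : complete R B := by
  obtain ⟨⟨hcf, hdef⟩, hmax⟩ := h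
  refine ⟨⟨hcf, hdef⟩, fun b hb => ?_⟩
  -- B attacks every attacker of b; show no element of B attacks b
  have hnoattB : ∀ a ∈ B, ¬ R a b := by
    intro a ha hab
    obtain ⟨c, hc, hca⟩ := hb a hab
    exact hcf c hc a ha hca
  have hnoattb : ∀ a ∈ B, ¬ R b a := by
    intro a ha hba
    obtain ⟨c, hc, hcb⟩ := hdef a ha b hba
    exact hnoattB c hc hcb
  have hnobb : ¬ R b b := fun hbb => by
    obtain ⟨c, hc, hcb⟩ := hb b hbb
    exact hnoattB c hc hcb
  have hadm : admissible R (B ∪ {b}) := by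
    constructor
    · rintro a (ha | rfl) c (hc | rfl)
      · exact hcf a ha c hc
      · exact hnoattB a ha
      · exact hnoattb c hc
      · exact hnobb
    · rintro x (hx | rfl) a hax
      · obtain ⟨c, hc, hca⟩ := hdef x hx a hax
        exact ⟨c, Or.inl hc, hca⟩
      · obtain ⟨c, hc, hca⟩ := hb a hax
        exact ⟨c, Or.inl hc, hca⟩
  have := hmax (B ∪ {b}) hadm (Set.subset_union_left)
  rw [this]
  exact Or.inr rfl
end

section
/- In a finite Dung argumentation framework, every semi-stable extension (a complete extension whose range B ∪ B⁺ is maximal w.r.t. set inclusion among complete extensions) is a preferred extension. -/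
def plusSet {Args : Type*} (R : Args → Args → Prop) (B : Set Args) : Set Args :=
  {a | ∃ b ∈ B, R b a}

def semiStable {Args : Type*} (R : Args → Args → Prop) (B : Set Args) : Prop :=
  complete R B ∧
    ∀ C, complete R C → (B ∪ plusSet R B) ⊆ (C ∪ plusSet R C) →
      (B ∪ plusSet R B) = (C ∪ plusSet R C)

lemma fund_lemma {Args : Type*} (R : Args → Args → Prop) (C : Set Args) (b : Args)
    (hC : admissible R C) (hb : defends R C b) : admissible R (insert b C) := by
  obtain ⟨cf, df⟩ := hC
  constructor
  · intro a ha c hc hR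
    rcases ha with rfl | ha <;> rcases hc with rfl | hc
    · obtain ⟨d, hd, hdb⟩ := hb _ hR
      obtain ⟨e, he, hed⟩ := hb d hdb
      exact cf e he d hd hed
    · obtain ⟨d, hd, hdb⟩ := df c hc _ hR
      obtain ⟨e, he, hed⟩ := hb d hdb
      exact cf e he d hd hed
    · obtain ⟨d, hd, hda⟩ := hb a hR
      exact cf d hd a ha hda
    · exact cf a ha c hc hR
  · intro x hx a haR
    rcases hx with rfl | hx
    · obtain ⟨d, hd, h'⟩ := hb a haR
      exact ⟨d, Or.inr hd, h'⟩
    · obtain ⟨d, hd, h'⟩ := df x hx a haR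
      exact ⟨d, Or.inr hd, h'⟩

lemma exists_complete {Args : Type*} [Fintype Args] (R : Args → Args → Prop) (C : Set Args)
    (hC : admissible R C) : ∃ D, complete R D ∧ C ⊆ D := by
  have hfin : ({D | admissible R D ∧ C ⊆ D} : Set (Set Args)).Finite := Set.toFinite _
  obtain ⟨D, hD, hmax'⟩ := Set.Finite.exists_maximalFor id _ hfin ⟨C, hC, subset_rfl⟩
  have hmax : ∀ a', admissible R a' ∧ C ⊆ a' → id D ≤ id a' → id D = id a' :=
    fun a' ha' h => le_antisymm h (hmax' ha' h)
  refine ⟨D, ⟨hD.1, ?_⟩, hD.2⟩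
  intro x hx
  have hadm := fund_lemma R D x hD.1 hx
  have := hmax (insert x D) ⟨hadm, hD.2.trans (Set.subset_insert _ _)⟩
    (Set.subset_insert _ _)
  simp only [id] at this
  rw [this]
  exact Set.mem_insert _ _

theorem semiStable_is_preferred
    {Args : Type*} [Fintype Args] (R : Args → Args → Prop) (B : Set Args)
    (h : semiStable R B) : preferred R B := by
  obtain ⟨hBc, hmax⟩ := h
  refine ⟨hBc.1, fun C hC hBC => ?_⟩
  obtain ⟨D, hDc, hCD⟩ := exists_complete R C hC
  have hBD : B ⊆ D := hBC.trans hCD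
  have hsub : (B ∪ plusSet R B) ⊆ (D ∪ plusSet R D) := by
    rintro x (hx | ⟨b, hb, hR⟩)
    · exact Or.inl (hBD hx)
    · exact Or.inr ⟨b, hBD hb, hR⟩
  have heq := hmax D hDc hsub
  apply Set.Subset.antisymm hBC
  intro c hc
  have hcD : c ∈ D := hCD hc
  have : c ∈ B ∪ plusSet R B := heq ▸ Or.inl hcD
  rcases this with hcB | ⟨b, hb, hRbc⟩
  · exact hcB
  · exact absurd hRbc (hDc.1.1 b (hBD hb) c hcD)
end
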